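/- arXiv:2008.11274 — 2 statements merged into one kernel-verified Lean document; each statement's English description precedes it below -/
import Mathlib

section
/- Let (Θ, μ) be a probability space and (X, ν) a finite measure space. Let (λ_i)_{i≥1} be a summable sequence of nonnegative reals, (Φ_i)_{i≥1} an orthonormal family in L²(X, ν), (f_i)_{i≥1} an orthonormal family in L²(Θ, μ), and f̄ ∈ L²(X, ν). Let (Ψ_k)_{k≥0} be a family of pairwise orthogonal nonzero elements of L²(Θ, μ), and suppose that for each i = 1, …, N the mode f_i admits the expansion f_i = Σ_{k=0}^∞ c_{i,k} Ψ_k converging in L²(Θ, μ). Given approximate coefficients ĉ_{i,k} for 0 ≤ k ≤ N_PC, define f_i^PC = Σ_{k=0}^{N_PC} ĉ_{i,k} Ψ_k, and define f_N(ξ, s) = f̄(s) + Σ_{i=1}^N √λ_i f_i(ξ) Φ_i(s) and f_N^PC(ξ, s) = f̄(s) + Σ_{i=1}^N √λ_i f_i^PC(ξ) Φ_i(s). Then ‖f_N − f_N^PC‖²_{L²(Θ×X, μ⊗ν)} = Σ_{i=1}^N λ_i [ Σ_{k=0}^{N_PC} (c_{i,k} − ĉ_{i,k})² ‖Ψ_k‖²_{L²(Θ,μ)}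 + Σ_{k=N_PC+1}^∞ c_{i,k}² ‖Ψ_k‖²_{L²(Θ,μ)} ]. -/
open MeasureTheory Filter Topology

section Helpers
variable {α : Type*} [MeasurableSpace α] {μ : Measure α}

lemma integrable_mul_L2 {h g : α → ℝ} (hh : MemLp h 2 μ) (hg : MemLp g 2 μ) :
    Integrable (fun x => h x * g x) μ := by
  have := hg.smul (φ := h) hh (r := 1) (hpqr := ⟨by simp [ENNReal.inv_two_add_inv_two]⟩)
  rw [memLp_one_iff_integrable] at this
  simp only [smul_eq_mul] at this
  exact this

lemma norm_toLp_sq {h : α → ℝ} (hm : MemLp h 2 μ) :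
    ‖hm.toLp h‖ ^ 2 = ∫ x, h x ^ 2 ∂μ := by
  rw [← real_inner_self_eq_norm_sq, L2.inner_def]
  refine integral_congr_ae ?_
  filter_upwards [hm.coeFn_toLp] with x hx
  simp [hx, RCLike.inner_apply, sq]

lemma integral_sq_finsum (Psi : ℕ → α → ℝ) (hPsi_mem : ∀ k, MemLp (Psi k) 2 μ)
    (hPsi_orth : ∀ k l, k ≠ l → ∫ ξ, Psi k ξ * Psi l ξ ∂μ = 0) (e : ℕ → ℝ) (K : ℕ) :
    ∫ ξ, (∑ k ∈ Finset.range K, e k * Psi k ξ) ^ 2 ∂μ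
      = ∑ k ∈ Finset.range K, e k ^ 2 * ∫ ξ, (Psi k ξ) ^ 2 ∂μ := by
  have hint : ∀ k l : ℕ, Integrable (fun ξ => (e k * Psi k ξ) * (e l * Psi l ξ)) μ := by
    intro k l
    have heq : (fun ξ => (e k * Psi k ξ) * (e l * Psi l ξ))
        = fun ξ => (e k * e l) * (Psi k ξ * Psi l ξ) := by funext ξ; ring
    rw [heq]
    exact (integrable_mul_L2 (hPsi_mem k) (hPsi_mem l)).const_mul _
  calc ∫ ξ, (∑ k ∈ Finset.range K, e k * Psi k ξ) ^ 2 ∂μ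
      = ∫ ξ, ∑ k ∈ Finset.range K, ∑ l ∈ Finset.range K,
          (e k * Psi k ξ) * (e l * Psi l ξ) ∂μ := by
        congr 1; funext ξ; rw [sq, Finset.sum_mul_sum]
    _ = ∑ k ∈ Finset.range K, ∑ l ∈ Finset.range K,
          ∫ ξ, (e k * Psi k ξ) * (e l * Psi l ξ) ∂μ := by
        rw [integral_finset_sum _ (fun k _ => integrable_finset_sum _ (fun l _ => hint k l))]
        exact Finset.sum_congr rfl fun k _ => integral_finset_sum _ fun l _ => hint k l
    _ = ∑ k ∈ Finset.range K, e k ^ 2 * ∫ ξ, (Psi k ξ) ^ 2 ∂μ := by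
        refine Finset.sum_congr rfl fun k hk => ?_
        rw [Finset.sum_eq_single k]
        · have heq : (fun ξ => (e k * Psi k ξ) * (e k * Psi k ξ))
              = fun ξ => (e k ^ 2) * (Psi k ξ ^ 2) := by funext ξ; ring
          rw [heq, MeasureTheory.integral_const_mul]
        · intro l _ hlk
          have heq : (fun ξ => (e k * Psi k ξ) * (e l * Psi l ξ))
              = fun ξ => (e k * e l) * (Psi k ξ * Psi l ξ) := by funext ξ; ring
          rw [heq, MeasureTheory.integral_const_mul, hPsi_orth k l (fun h => hlk h.symm), mul_zero]
        · intro h; exact absurd hk h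

lemma mode_error
    (Psi : ℕ → α → ℝ) (hPsi_mem : ∀ k, MemLp (Psi k) 2 μ)
    (hPsi_orth : ∀ k l, k ≠ l → ∫ ξ, Psi k ξ * Psi l ξ ∂μ = 0)
    (f : α → ℝ) (hf : MemLp f 2 μ) (NPC : ℕ) (c chat : ℕ → ℝ)
    (hconv : Tendsto (fun K => ∫ ξ,
      (f ξ - ∑ k ∈ Finset.range K, c k * Psi k ξ) ^ 2 ∂μ) atTop (𝓝 0)) :
    ∫ ξ, (f ξ - ∑ k ∈ Finset.range (NPC + 1), chat k * Psi k ξ) ^ 2 ∂μ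
      = (∑ k ∈ Finset.range (NPC + 1), (c k - chat k) ^ 2 * ∫ ξ, (Psi k ξ) ^ 2 ∂μ)
        + ∑' k : ℕ, (c (k + (NPC + 1))) ^ 2 * ∫ ξ, (Psi (k + (NPC + 1)) ξ) ^ 2 ∂μ := by
  classical
  set g : α → ℝ := fun ξ => ∑ k ∈ Finset.range (NPC + 1), chat k * Psi k ξ with hg_def
  set s : ℕ → α → ℝ := fun K ξ => ∑ k ∈ Finset.range K, c k * Psi k ξ with hs_def
  have memg : MemLp g 2 μ := by
    have h := memLp_finset_sum' (Finset.range (NPC + 1))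
      (f := fun k ξ => chat k * Psi k ξ) (fun k _ => (hPsi_mem k).const_mul _)
    have heq : (∑ k ∈ Finset.range (NPC + 1), fun ξ => chat k * Psi k ξ) = g := by
      funext ξ; rw [Finset.sum_apply]
    rwa [heq] at h
  have mems : ∀ K, MemLp (s K) 2 μ := by
    intro K
    have h := memLp_finset_sum' (Finset.range K)
      (f := fun k ξ => c k * Psi k ξ) (fun k _ => (hPsi_mem k).const_mul _)
    have heq : (∑ k ∈ Finset.range K, fun ξ => c k * Psi k ξ) = s K := by
      funext ξ; rw [Finset.sum_apply]
    rwa [heq] at h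
  set F := hf.toLp f with hF
  set G := memg.toLp g with hG
  set S : ℕ → Lp ℝ 2 μ := fun K => (mems K).toLp (s K) with hS
  have hfs : ∀ K, ‖F - S K‖ ^ 2 = ∫ ξ, (f ξ - s K ξ) ^ 2 ∂μ := by
    intro K
    rw [hF, hS, ← MemLp.toLp_sub hf (mems K)]
    exact norm_toLp_sq (hf.sub (mems K))
  have hSF : Tendsto S atTop (𝓝 F) := by
    rw [tendsto_iff_norm_sub_tendsto_zero]
    have h1 : Tendsto (fun K => ‖F - S K‖ ^ 2) atTop (𝓝 0) := by
      simpa only [hfs] using hconv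
    have h2 : Tendsto (fun K => Real.sqrt (‖F - S K‖ ^ 2)) atTop (𝓝 (Real.sqrt 0)) :=
      (Real.continuous_sqrt.tendsto 0).comp h1
    simpa [Real.sqrt_sq (norm_nonneg _), norm_sub_rev (S _) F] using h2
  have hnorm : Tendsto (fun K => ‖S K - G‖ ^ 2) atTop (𝓝 (‖F - G‖ ^ 2)) :=
    ((continuous_norm.pow 2).tendsto _).comp (hSF.sub_const G)
  set e : ℕ → ℝ := fun k => if k < NPC + 1 then c k - chat k else c k with he
  set w : ℕ → ℝ := fun k => e k ^ 2 * ∫ ξ, (Psi k ξ) ^ 2 ∂μ with hw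
  have hval : ∀ K, NPC + 1 ≤ K → ‖S K - G‖ ^ 2 = ∑ k ∈ Finset.range K, w k := by
    intro K hK
    have hsg : ∀ ξ, s K ξ - g ξ = ∑ k ∈ Finset.range K, e k * Psi k ξ := by
      intro ξ
      have hsplit : ∑ k ∈ Finset.range K, e k * Psi k ξ
          = (∑ k ∈ Finset.range (NPC + 1), e k * Psi k ξ)
            + ∑ k ∈ Finset.Ico (NPC + 1) K, e k * Psi k ξ := by
        rw [Finset.range_eq_Ico, ← Finset.sum_Ico_consecutive _ (Nat.zero_le _) hK]
        rw [Finset.range_eq_Ico]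

      rw [hsplit]
      have h1 : ∑ k ∈ Finset.range (NPC + 1), e k * Psi k ξ
          = ∑ k ∈ Finset.range (NPC + 1), (c k * Psi k ξ - chat k * Psi k ξ) := by
        refine Finset.sum_congr rfl fun k hk => ?_
        rw [Finset.mem_range] at hk
        simp only [he, if_pos hk]; ring
      have h2 : ∑ k ∈ Finset.Ico (NPC + 1) K, e k * Psi k ξ
          = ∑ k ∈ Finset.Ico (NPC + 1) K, c k * Psi k ξ := by
        refine Finset.sum_congr rfl fun k hk => ?_
        rw [Finset.mem_Ico] at hk
        simp only [he, if_neg (not_lt.mpr hk.1)]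
      rw [h1, h2, Finset.sum_sub_distrib]
      have h3 : s K ξ = (∑ k ∈ Finset.range (NPC + 1), c k * Psi k ξ)
          + ∑ k ∈ Finset.Ico (NPC + 1) K, c k * Psi k ξ := by
        show ∑ k ∈ Finset.range K, c k * Psi k ξ = _
        rw [Finset.range_eq_Ico, ← Finset.sum_Ico_consecutive _ (Nat.zero_le _) hK]
        rw [Finset.range_eq_Ico]

      rw [h3, hg_def]; ring
    have hA : ‖S K - G‖ ^ 2 = ∫ ξ, (s K ξ - g ξ) ^ 2 ∂μ := by
      rw [hS, hG, ← MemLp.toLp_sub (mems K) memg]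
      exact norm_toLp_sq ((mems K).sub memg)
    have hB : (fun ξ => (s K ξ - g ξ) ^ 2)
        = fun ξ => (∑ k ∈ Finset.range K, e k * Psi k ξ) ^ 2 := by
      funext ξ; rw [hsg ξ]
    rw [hA, hB, integral_sq_finsum Psi hPsi_mem hPsi_orth e K]
  -- head and tail
  set head : ℝ := ∑ k ∈ Finset.range (NPC + 1),
      (c k - chat k) ^ 2 * ∫ ξ, (Psi k ξ) ^ 2 ∂μ with hhead
  set tt : ℕ → ℝ := fun k => (c (k + (NPC + 1))) ^ 2
      * ∫ ξ, (Psi (k + (NPC + 1)) ξ) ^ 2 ∂μ with htt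
  have hsplitw : ∀ m : ℕ, ∑ k ∈ Finset.range (m + (NPC + 1)), w k
      = head + ∑ k ∈ Finset.range m, tt k := by
    intro m
    have h0 : ∑ k ∈ Finset.range (m + (NPC + 1)), w k
        = (∑ k ∈ Finset.range (NPC + 1), w k)
          + ∑ k ∈ Finset.Ico (NPC + 1) (m + (NPC + 1)), w k := by
      rw [Finset.range_eq_Ico,
        ← Finset.sum_Ico_consecutive _ (Nat.zero_le _) (Nat.le_add_left _ _)]
      rw [Finset.range_eq_Ico]

    have h1 : ∑ k ∈ Finset.range (NPC + 1), w k = head := by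
      refine Finset.sum_congr rfl fun k hk => ?_
      rw [Finset.mem_range] at hk
      simp only [hw, he, if_pos hk]
    have h2 : ∑ k ∈ Finset.Ico (NPC + 1) (m + (NPC + 1)), w k
        = ∑ k ∈ Finset.range m, tt k := by
      rw [Finset.sum_Ico_eq_sum_range]
      simp only [Nat.add_sub_cancel]
      refine Finset.sum_congr rfl fun k _ => ?_
      simp only [hw, he, htt, if_neg (by omega : ¬ NPC + 1 + k < NPC + 1)]
      rw [add_comm (NPC + 1) k]
    rw [h0, h1, h2]
  have htail : Tendsto (fun m => ∑ k ∈ Finset.range m, tt k) atTop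
      (𝓝 (‖F - G‖ ^ 2 - head)) := by
    have h1 : Tendsto (fun m : ℕ => ‖S (m + (NPC + 1)) - G‖ ^ 2) atTop
        (𝓝 (‖F - G‖ ^ 2)) := hnorm.comp (tendsto_add_atTop_nat (NPC + 1))
    have h2 : (fun m : ℕ => ‖S (m + (NPC + 1)) - G‖ ^ 2)
        = fun m => head + ∑ k ∈ Finset.range m, tt k := by
      funext m
      rw [hval _ (Nat.le_add_left _ _), hsplitw m]
    rw [h2] at h1
    have h3 := h1.sub_const head
    simpa using h3
  have hHS : HasSum tt (‖F - G‖ ^ 2 - head) := by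
    refine (hasSum_iff_tendsto_nat_of_nonneg (fun k => ?_) _).2 htail
    exact mul_nonneg (sq_nonneg _) (integral_nonneg fun ξ => sq_nonneg _)
  have hfg : ∫ ξ, (f ξ - g ξ) ^ 2 ∂μ = ‖F - G‖ ^ 2 := by
    rw [hF, hG, ← MemLp.toLp_sub hf memg]
    exact (norm_toLp_sq (hf.sub memg)).symm
  rw [hfg, hHS.tsum_eq]
  ring

end Helpers

/-- The error between the truncated KLE `f_N` and the bispectral surrogate `f_N^PC`
(obtained by replacing each KL mode with a truncated PCE with approximate
coefficients) equals
`∑_{i=1}^N λ_i [ ∑_{k=0}^{N_PC} (c_{i,k} - ĉ_{i,k})² ‖Ψ_k‖² + ∑_{k>N_PC} c_{i,k}² ‖Ψ_k‖² ]`. -/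
theorem kle_pce_surrogate_error
    {Θ X : Type*} [MeasurableSpace Θ] [MeasurableSpace X]
    (μ : Measure Θ) (ν : Measure X)
    [IsProbabilityMeasure μ] [IsFiniteMeasure ν]
    (lam : ℕ → ℝ) (hlam_nonneg : ∀ i, 0 ≤ lam i) (hlam_sum : Summable lam)
    (Phi : ℕ → X → ℝ) (hPhi_mem : ∀ i, MemLp (Phi i) 2 ν)
    (hPhi_on : ∀ i j, ∫ s, Phi i s * Phi j s ∂ν = if i = j then 1 else 0)
    (f_mode : ℕ → Θ → ℝ) (hf_mem : ∀ i, MemLp (f_mode i) 2 μ)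
    (hf_on : ∀ i j, ∫ ξ, f_mode i ξ * f_mode j ξ ∂μ = if i = j then 1 else 0)
    (fbar : X → ℝ) (hfbar : MemLp fbar 2 ν)
    (Psi : ℕ → Θ → ℝ) (hPsi_mem : ∀ k, MemLp (Psi k) 2 μ)
    (hPsi_orth : ∀ k l, k ≠ l → ∫ ξ, Psi k ξ * Psi l ξ ∂μ = 0)
    (hPsi_ne : ∀ k, ¬ (Psi k =ᵐ[μ] 0))
    (N NPC : ℕ) (c : ℕ → ℕ → ℝ)
    (hPCE : ∀ i < N, Tendsto (fun K => ∫ ξ,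
        (f_mode i ξ - ∑ k ∈ Finset.range K, c i k * Psi k ξ) ^ 2 ∂μ) atTop (𝓝 0))
    (chat : ℕ → ℕ → ℝ) :
    ∫ p, ((fbar p.2 + ∑ i ∈ Finset.range N,
            Real.sqrt (lam i) * f_mode i p.1 * Phi i p.2)
        - (fbar p.2 + ∑ i ∈ Finset.range N,
            Real.sqrt (lam i) *
              (∑ k ∈ Finset.range (NPC + 1), chat i k * Psi k p.1) * Phi i p.2)) ^ 2
        ∂(μ.prod ν)
      = ∑ i ∈ Finset.range N, lam i *
          ((∑ k ∈ Finset.range (NPC + 1),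
              (c i k - chat i k) ^ 2 * ∫ ξ, (Psi k ξ) ^ 2 ∂μ)
            + ∑' k : ℕ,
              (c i (k + (NPC + 1))) ^ 2 * ∫ ξ, (Psi (k + (NPC + 1)) ξ) ^ 2 ∂μ) := by
  classical
  set g : ℕ → Θ → ℝ := fun i ξ => ∑ k ∈ Finset.range (NPC + 1), chat i k * Psi k ξ with hg
  set d : ℕ → Θ → ℝ := fun i ξ => f_mode i ξ - g i ξ with hd
  have memg : ∀ i, MemLp (g i) 2 μ := by
    intro i
    have h := memLp_finset_sum' (Finset.range (NPC + 1))
      (f := fun k ξ => chat i k * Psi k ξ) (fun k _ => (hPsi_mem k).const_mul _)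
    have heq : (∑ k ∈ Finset.range (NPC + 1), fun ξ => chat i k * Psi k ξ) = g i := by
      funext ξ; rw [Finset.sum_apply]
    rwa [heq] at h
  have memd : ∀ i, MemLp (d i) 2 μ := fun i => (hf_mem i).sub (memg i)
  have hintd : ∀ i j : ℕ, Integrable
      (fun ξ => (Real.sqrt (lam i) * d i ξ) * (Real.sqrt (lam j) * d j ξ)) μ := by
    intro i j
    have heq : (fun ξ => (Real.sqrt (lam i) * d i ξ) * (Real.sqrt (lam j) * d j ξ))
        = fun ξ => (Real.sqrt (lam i) * Real.sqrt (lam j)) * (d i ξ * d j ξ) := by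
      funext ξ; ring
    rw [heq]
    exact (integrable_mul_L2 (memd i) (memd j)).const_mul _
  have hintP : ∀ i j : ℕ, Integrable (fun s => Phi i s * Phi j s) ν :=
    fun i j => integrable_mul_L2 (hPhi_mem i) (hPhi_mem j)
  have hpt : (fun p : Θ × X => ((fbar p.2 + ∑ i ∈ Finset.range N,
            Real.sqrt (lam i) * f_mode i p.1 * Phi i p.2)
        - (fbar p.2 + ∑ i ∈ Finset.range N,
            Real.sqrt (lam i) * g i p.1 * Phi i p.2)) ^ 2)
      = fun p : Θ × X => ∑ i ∈ Finset.range N, ∑ j ∈ Finset.range N,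
          ((Real.sqrt (lam i) * d i p.1) * (Real.sqrt (lam j) * d j p.1))
            * (Phi i p.2 * Phi j p.2) := by
    funext p
    rw [add_sub_add_left_eq_sub, ← Finset.sum_sub_distrib]
    have h1 : ∑ i ∈ Finset.range N,
        (Real.sqrt (lam i) * f_mode i p.1 * Phi i p.2
          - Real.sqrt (lam i) * g i p.1 * Phi i p.2)
        = ∑ i ∈ Finset.range N, (Real.sqrt (lam i) * d i p.1) * Phi i p.2 := by
      refine Finset.sum_congr rfl fun i _ => ?_
      simp only [hd]; ring
    rw [h1, sq, Finset.sum_mul_sum]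
    exact Finset.sum_congr rfl fun i _ => Finset.sum_congr rfl fun j _ => by ring
  rw [hpt]
  have hswap : ∫ p : Θ × X, (∑ i ∈ Finset.range N, ∑ j ∈ Finset.range N,
        ((Real.sqrt (lam i) * d i p.1) * (Real.sqrt (lam j) * d j p.1))
          * (Phi i p.2 * Phi j p.2)) ∂(μ.prod ν)
      = ∑ i ∈ Finset.range N, ∑ j ∈ Finset.range N,
          (∫ ξ, (Real.sqrt (lam i) * d i ξ) * (Real.sqrt (lam j) * d j ξ) ∂μ)
            * ∫ s, Phi i s * Phi j s ∂ν := by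
    rw [integral_finset_sum _ (fun i _ => integrable_finset_sum _
      (fun j _ => (hintd i j).mul_prod (hintP i j)))]
    refine Finset.sum_congr rfl fun i _ => ?_
    rw [integral_finset_sum _ (fun j _ => (hintd i j).mul_prod (hintP i j))]
    exact Finset.sum_congr rfl fun j _ => integral_prod_mul
      (fun ξ => Real.sqrt (lam i) * d i ξ * (Real.sqrt (lam j) * d j ξ))
      (fun s => Phi i s * Phi j s)
  rw [hswap]
  refine Finset.sum_congr rfl fun i hi => ?_
  rw [Finset.mem_range] at hi
  rw [Finset.sum_eq_single i]
  · rw [hPhi_on i i, if_pos rfl, mul_one]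
    have heq : (fun ξ => (Real.sqrt (lam i) * d i ξ) * (Real.sqrt (lam i) * d i ξ))
        = fun ξ => lam i * (d i ξ) ^ 2 := by
      funext ξ
      rw [show (Real.sqrt (lam i) * d i ξ) * (Real.sqrt (lam i) * d i ξ)
          = (Real.sqrt (lam i) * Real.sqrt (lam i)) * (d i ξ) ^ 2 by ring,
        Real.mul_self_sqrt (hlam_nonneg i)]
    rw [heq, MeasureTheory.integral_const_mul]
    congr 1
    exact mode_error Psi hPsi_mem hPsi_orth (f_mode i) (hf_mem i) NPC (c i) (chat i)
      (hPCE i hi)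
  · intro j _ hji
    rw [hPhi_on i j, if_neg (fun h => hji h.symm), mul_zero]
  · intro h
    exact absurd (Finset.mem_range.mpr hi) h
end

section
/- Let (Θ, μ) be a probability space and (X, ν) a finite measure space. Let (λ_i)_{i≥1} be a summable sequence of nonnegative reals, (Φ_i)_{i≥1} an orthonormal family in L²(X, ν), (f_i)_{i≥1} an orthonormal family in L²(Θ, μ), and f̄ ∈ L²(X, ν). Define f ∈ L²(Θ × X, μ ⊗ ν) by f(ξ, s) = f̄(s) + Σ_{i=1}^∞ √λ_i f_i(ξ) Φ_i(s) (series converging in L²). Let (Ψ_k)_{k≥0} be a family of pairwise orthogonal nonzero elements of L²(Θ, μ), suppose f_i = Σ_{k=0}^∞ c_{i,k} Ψ_k in L²(Θ, μ) for i = 1, …, N, let f_i^PC = Σ_{k=0}^{N_PC} ĉ_{i,k} Ψ_k, and let f_N^PC(ξ, s) = f̄(s) + Σ_{i=1}^N √λ_i f_i^PC(ξ) Φ_i(s). Then the total surrogate error is bounded by ‖f − f_N^PC‖²_{L²(Θ×X)} ≤ Σ_{i=N+1}^∞ λ_i + Σ_{i=1}^N λ_i Σ_{k=0}^{N_PC}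 (c_{i,k} − ĉ_{i,k})² ‖Ψ_k‖²_{L²(Θ,μ)} + Σ_{i=1}^N λ_i Σ_{k=N_PC+1}^∞ c_{i,k}² ‖Ψ_k‖²_{L²(Θ,μ)}, i.e., by the sum of the KLE truncation error, the error due to inexact PCE coefficients, and the PCE truncation error. -/
open MeasureTheory Filter Topology
open scoped InnerProductSpace

section Helpers
variable {Θ X : Type*} [MeasurableSpace Θ] [MeasurableSpace X]
  {μ : Measure Θ} {ν : Measure X} [IsProbabilityMeasure μ] [IsFiniteMeasure ν]

set_option linter.unusedSectionVars false

lemma memLp_mul_prod {g : Θ → ℝ} {h : X → ℝ} (hg : MemLp g 2 μ) (hh : MemLp h 2 ν) :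
    MemLp (fun p : Θ × X => g p.1 * h p.2) 2 (μ.prod ν) := by
  have hgm : AEStronglyMeasurable (fun p : Θ × X => g p.1) (μ.prod ν) :=
    hg.1.comp_quasiMeasurePreserving Measure.quasiMeasurePreserving_fst
  have hhm : AEStronglyMeasurable (fun p : Θ × X => h p.2) (μ.prod ν) :=
    hh.1.comp_quasiMeasurePreserving Measure.quasiMeasurePreserving_snd
  have hm : AEStronglyMeasurable (fun p : Θ × X => g p.1 * h p.2) (μ.prod ν) := hgm.mul hhm
  rw [memLp_two_iff_integrable_sq hm]
  have : (fun p : Θ × X => (g p.1 * h p.2) ^ 2) = fun p : Θ × X => (g p.1 ^ 2) * (h p.2 ^ 2) := by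
    funext p; ring
  rw [this]
  exact Integrable.mul_prod ((memLp_two_iff_integrable_sq hg.1).1 hg) ((memLp_two_iff_integrable_sq hh.1).1 hh)

lemma integral_mul_prod_eq (g₁ g₂ : Θ → ℝ) (h₁ h₂ : X → ℝ) :
    ∫ p, (g₁ p.1 * h₁ p.2) * (g₂ p.1 * h₂ p.2) ∂(μ.prod ν)
      = (∫ ξ, g₁ ξ * g₂ ξ ∂μ) * (∫ s, h₁ s * h₂ s ∂ν) := by
  have : (fun p : Θ × X => (g₁ p.1 * h₁ p.2) * (g₂ p.1 * h₂ p.2))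
      = fun p : Θ × X => (g₁ p.1 * g₂ p.1) * (h₁ p.2 * h₂ p.2) := by funext p; ring
  rw [this]
  exact integral_prod_mul (L := ℝ) (fun ξ => g₁ ξ * g₂ ξ) (fun s => h₁ s * h₂ s)

lemma integral_sq_prod (g : Θ → ℝ) (h : X → ℝ) :
    ∫ p, (g p.1 * h p.2) ^ 2 ∂(μ.prod ν) = (∫ ξ, g ξ ^ 2 ∂μ) * (∫ s, h s ^ 2 ∂ν) := by
  simp_rw [pow_two]
  exact integral_mul_prod_eq g g h h

lemma innerL2_eq (x y : Lp ℝ 2 (μ.prod ν)) :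
    ⟪x, y⟫_ℝ = ∫ p, x p * y p ∂(μ.prod ν) := by
  rw [L2.inner_def]; simp [RCLike.inner_apply]
  congr 1; funext p; ring

lemma normL2_sq_eq (x : Lp ℝ 2 (μ.prod ν)) :
    ‖x‖ ^ 2 = ∫ p, (x p) ^ 2 ∂(μ.prod ν) := by
  rw [← real_inner_self_eq_norm_sq, innerL2_eq]
  congr 1; funext p; ring

lemma inner_eq_of_rep (x y : Lp ℝ 2 (μ.prod ν)) (g₁ g₂ : Θ → ℝ) (h₁ h₂ : X → ℝ)
    (hx : ⇑x =ᵐ[μ.prod ν] fun p => g₁ p.1 * h₁ p.2)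
    (hy : ⇑y =ᵐ[μ.prod ν] fun p => g₂ p.1 * h₂ p.2) :
    ⟪x, y⟫_ℝ = (∫ ξ, g₁ ξ * g₂ ξ ∂μ) * (∫ s, h₁ s * h₂ s ∂ν) := by
  rw [innerL2_eq, ← integral_mul_prod_eq]
  refine integral_congr_ae ?_
  filter_upwards [hx, hy] with p h1 h2
  rw [h1, h2]

lemma coeFn_sum_smul {α : Type*} [MeasurableSpace α] {m : Measure α} {ι : Type*} (s : Finset ι)
    (a : ι → ℝ) (x : ι → Lp ℝ 2 m) (rep : ι → α → ℝ)
    (h : ∀ i ∈ s, ⇑(x i) =ᵐ[m] rep i) :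
    ⇑(∑ i ∈ s, a i • x i) =ᵐ[m] fun p => ∑ i ∈ s, a i * rep i p := by
  classical
  induction s using Finset.induction_on with
  | empty => simp only [Finset.sum_empty]; exact Lp.coeFn_zero ℝ 2 m
  | insert b s hx ih =>
    rw [Finset.sum_insert hx]
    filter_upwards [Lp.coeFn_add (a b • x b) (∑ i ∈ s, a i • x i),
      Lp.coeFn_smul (a b) (x b), h b (Finset.mem_insert_self b s),
      ih (fun i hi => h i (Finset.mem_insert_of_mem hi))] with p h1 h2 h3 h4
    rw [h1, Finset.sum_insert hx, Pi.add_apply, h2, h4, Pi.smul_apply, h3, smul_eq_mul]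

lemma norm_sq_sum_orthogonal {E : Type*} [NormedAddCommGroup E] [InnerProductSpace ℝ E]
    (s : Finset ℕ) (v : ℕ → E) (horth : ∀ i ∈ s, ∀ j ∈ s, i ≠ j → ⟪v i, v j⟫_ℝ = 0) :
    ‖∑ i ∈ s, v i‖ ^ 2 = ∑ i ∈ s, ‖v i‖ ^ 2 := by
  rw [← real_inner_self_eq_norm_sq, sum_inner]
  refine Finset.sum_congr rfl fun i hi => ?_
  rw [inner_sum, Finset.sum_eq_single i (fun j hj hne => horth i hi j hj (Ne.symm hne) ▸ rfl)
    (fun h => absurd hi h), real_inner_self_eq_norm_sq]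

end Helpers

set_option maxHeartbeats 1000000 in
/-- Upper bound on the total error of the bispectral surrogate: KLE truncation
error, plus error due to inexact PCE coefficients, plus PCE truncation error. -/
theorem bispectral_surrogate_total_error_bound
    {Θ X : Type*} [MeasurableSpace Θ] [MeasurableSpace X]
    (μ : Measure Θ) (ν : Measure X)
    [IsProbabilityMeasure μ] [IsFiniteMeasure ν]
    (lam : ℕ → ℝ) (hlam_nonneg : ∀ i, 0 ≤ lam i) (hlam_sum : Summable lam)
    (Phi : ℕ → X → ℝ) (hPhi_mem : ∀ i, MemLp (Phi i) 2 ν)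
    (hPhi_on : ∀ i j, ∫ s, Phi i s * Phi j s ∂ν = if i = j then 1 else 0)
    (f_mode : ℕ → Θ → ℝ) (hf_mem : ∀ i, MemLp (f_mode i) 2 μ)
    (hf_on : ∀ i j, ∫ ξ, f_mode i ξ * f_mode j ξ ∂μ = if i = j then 1 else 0)
    (fbar : X → ℝ) (hfbar : MemLp fbar 2 ν)
    (F : Θ × X → ℝ) (hF : MemLp F 2 (μ.prod ν))
    (hconv : Tendsto (fun M => ∫ p, (F p - (fbar p.2 + ∑ i ∈ Finset.range M,
        Real.sqrt (lam i) * f_mode i p.1 * Phi i p.2)) ^ 2 ∂(μ.prod ν))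
      atTop (𝓝 0))
    (Psi : ℕ → Θ → ℝ) (hPsi_mem : ∀ k, MemLp (Psi k) 2 μ)
    (hPsi_orth : ∀ k l, k ≠ l → ∫ ξ, Psi k ξ * Psi l ξ ∂μ = 0)
    (hPsi_ne : ∀ k, ¬ (Psi k =ᵐ[μ] 0))
    (N NPC : ℕ) (c : ℕ → ℕ → ℝ)
    (hPCE : ∀ i < N, Tendsto (fun K => ∫ ξ,
        (f_mode i ξ - ∑ k ∈ Finset.range K, c i k * Psi k ξ) ^ 2 ∂μ) atTop (𝓝 0))
    (chat : ℕ → ℕ → ℝ) :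
    ∫ p, (F p - (fbar p.2 + ∑ i ∈ Finset.range N,
            Real.sqrt (lam i) *
              (∑ k ∈ Finset.range (NPC + 1), chat i k * Psi k p.1) * Phi i p.2)) ^ 2
        ∂(μ.prod ν)
      ≤ (∑' i : ℕ, lam (N + i))
        + (∑ i ∈ Finset.range N, lam i *
            ∑ k ∈ Finset.range (NPC + 1),
              (c i k - chat i k) ^ 2 * ∫ ξ, (Psi k ξ) ^ 2 ∂μ)
        + ∑ i ∈ Finset.range N, lam i *
            ∑' k : ℕ,
              (c i (k + (NPC + 1))) ^ 2 * ∫ ξ, (Psi (k + (NPC + 1)) ξ) ^ 2 ∂μ := by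
  classical
  -- Lp elements
  set U : ℕ → Lp ℝ 2 (μ.prod ν) :=
    fun i => (memLp_mul_prod (hf_mem i) (hPhi_mem i)).toLp _ with hUdef
  set W : ℕ → ℕ → Lp ℝ 2 (μ.prod ν) :=
    fun i k => (memLp_mul_prod (hPsi_mem k) (hPhi_mem i)).toLp _ with hWdef
  have hUc : ∀ i, ⇑(U i) =ᵐ[μ.prod ν] fun p => f_mode i p.1 * Phi i p.2 :=
    fun i => MemLp.coeFn_toLp _
  have hWc : ∀ i k, ⇑(W i k) =ᵐ[μ.prod ν] fun p => Psi k p.1 * Phi i p.2 :=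
    fun i k => MemLp.coeFn_toLp _
  have hBmem : MemLp (fun p : Θ × X => fbar p.2) 2 (μ.prod ν) := by
    simpa using memLp_mul_prod (memLp_const (1 : ℝ)) hfbar
  set A : Lp ℝ 2 (μ.prod ν) := MemLp.toLp F hF - MemLp.toLp _ hBmem with hAdef
  set S : ℕ → Lp ℝ 2 (μ.prod ν) :=
    fun M => ∑ i ∈ Finset.range M, Real.sqrt (lam i) • U i with hSdef
  set R : ℕ → Lp ℝ 2 (μ.prod ν) :=
    fun i => U i - ∑ k ∈ Finset.range (NPC + 1), chat i k • W i k with hRdef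
  set D : Lp ℝ 2 (μ.prod ν) := ∑ i ∈ Finset.range N, Real.sqrt (lam i) • R i with hDdef
  set T : Lp ℝ 2 (μ.prod ν) := A - S N + D with hTdef
  have hRe : ∀ i, R i = U i - ∑ k ∈ Finset.range (NPC + 1), chat i k • W i k :=
    fun i => by simp only [hRdef]
  have hSe : ∀ M, S M = ∑ i ∈ Finset.range M, Real.sqrt (lam i) • U i :=
    fun M => by simp only [hSdef]
  -- inner products of basic vectors
  have hUU : ∀ i j, ⟪U i, U j⟫_ℝ = if i = j then 1 else 0 := by
    intro i j
    rw [inner_eq_of_rep (U i) (U j) (f_mode i) (f_mode j) (Phi i) (Phi j) (hUc i) (hUc j),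
      hf_on i j, hPhi_on i j]
    by_cases h : i = j <;> simp [h]
  have hWW : ∀ i j k l,
      ⟪W i k, W j l⟫_ℝ = (∫ ξ, Psi k ξ * Psi l ξ ∂μ) * (if i = j then 1 else 0) := by
    intro i j k l
    rw [inner_eq_of_rep _ _ (Psi k) (Psi l) (Phi i) (Phi j) (hWc i k) (hWc j l), hPhi_on i j]
  have hUW : ∀ i j k, i ≠ j → ⟪U i, W j k⟫_ℝ = 0 := by
    intro i j k h
    rw [inner_eq_of_rep _ _ (f_mode i) (Psi k) (Phi i) (Phi j) (hUc i) (hWc j k),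
      hPhi_on i j, if_neg h, mul_zero]
  have hRW : ∀ i j k, i ≠ j → ⟪R i, W j k⟫_ℝ = 0 := by
    intro i j k h
    rw [hRe i, inner_sub_left, hUW i j k h]
    have h2 : ⟪∑ l ∈ Finset.range (NPC + 1), chat i l • W i l, W j k⟫_ℝ = 0 := by
      rw [sum_inner]
      refine Finset.sum_eq_zero fun l _ => ?_
      rw [real_inner_smul_left, hWW i j l k, if_neg h, mul_zero, mul_zero]
    rw [h2, sub_zero]
  have hUR : ∀ i j, i ≠ j → ⟪U i, R j⟫_ℝ = 0 := by
    intro i j h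
    rw [hRe j, inner_sub_right, hUU i j, if_neg h]
    have h2 : ⟪U i, ∑ k ∈ Finset.range (NPC + 1), chat j k • W j k⟫_ℝ = 0 := by
      rw [inner_sum]
      refine Finset.sum_eq_zero fun k _ => ?_
      rw [real_inner_smul_right, hUW i j k h, mul_zero]
    rw [h2, sub_zero]
  have hRU : ∀ i j, i ≠ j → ⟪R i, U j⟫_ℝ = 0 := by
    intro i j h; rw [real_inner_comm]; exact hUR j i (Ne.symm h)
  have hRR : ∀ i j, i ≠ j → ⟪R i, R j⟫_ℝ = 0 := by
    intro i j h
    rw [hRe j, inner_sub_right, hRU i j h]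
    have h2 : ⟪R i, ∑ k ∈ Finset.range (NPC + 1), chat j k • W j k⟫_ℝ = 0 := by
      rw [inner_sum]
      refine Finset.sum_eq_zero fun k _ => ?_
      rw [real_inner_smul_right, hRW i j k h, mul_zero]
    rw [h2, sub_zero]
  have hUnorm : ∀ i, ‖U i‖ ^ 2 = 1 := by
    intro i; rw [← real_inner_self_eq_norm_sq, hUU i i, if_pos rfl]
  have hWnorm : ∀ i k, ‖W i k‖ ^ 2 = ∫ ξ, (Psi k ξ) ^ 2 ∂μ := by
    intro i k
    rw [← real_inner_self_eq_norm_sq, hWW i i k k, if_pos rfl, mul_one]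
    simp_rw [pow_two]
  -- the orthogonal expansion family
  set v : ℕ → Lp ℝ 2 (μ.prod ν) :=
    fun i => if i < N then Real.sqrt (lam i) • R i else Real.sqrt (lam i) • U i with hvdef
  have hve : ∀ i, v i = if i < N then Real.sqrt (lam i) • R i else Real.sqrt (lam i) • U i :=
    fun i => by simp only [hvdef]
  have hv_orth : ∀ i j, i ≠ j → ⟪v i, v j⟫_ℝ = 0 := by
    intro i j h
    rw [hve i, hve j]
    by_cases hi : i < N <;> by_cases hj : j < N <;>
      simp [hi, hj, real_inner_smul_left, real_inner_smul_right, hRR i j h, hUR i j h,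
        hRU i j h, hUU i j, if_neg h]
  have hv_norm : ∀ i, ‖v i‖ ^ 2 = lam i * (if i < N then ‖R i‖ ^ 2 else 1) := by
    intro i
    rw [hve i]
    by_cases hi : i < N <;>
      simp [hi, norm_smul, mul_pow, Real.sq_sqrt (hlam_nonneg i), Real.norm_eq_abs,
        abs_of_nonneg (Real.sqrt_nonneg _), hUnorm i]
  set CN : ℝ := ∑ i ∈ Finset.range N, lam i * ‖R i‖ ^ 2 with hCNdef
  have hZnorm : ∀ M, N ≤ M →
      ‖∑ i ∈ Finset.range M, v i‖ ^ 2 = CN + ∑ i ∈ Finset.Ico N M, lam i := by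
    intro M hM
    rw [norm_sq_sum_orthogonal _ v (fun i _ j _ h => hv_orth i j h)]
    rw [Finset.range_eq_Ico, ← Finset.sum_Ico_consecutive _ (Nat.zero_le N) hM,
      ← Finset.range_eq_Ico, hCNdef]
    congr 1
    · refine Finset.sum_congr rfl fun i hi => ?_
      rw [hv_norm i, if_pos (Finset.mem_range.1 hi)]
    · refine Finset.sum_congr rfl fun i hi => ?_
      rw [hv_norm i, if_neg (not_lt.2 (Finset.mem_Ico.1 hi).1), mul_one]
  -- decomposition of T
  have hTdecomp : ∀ M, N ≤ M → T = (A - S M) + ∑ i ∈ Finset.range M, v i := by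
    intro M hM
    have h1 : ∑ i ∈ Finset.range M, v i = D + (S M - S N) := by
      rw [Finset.range_eq_Ico, ← Finset.sum_Ico_consecutive _ (Nat.zero_le N) hM,
        ← Finset.range_eq_Ico]
      have h2 : ∑ i ∈ Finset.range N, v i = D := by
        rw [hDdef]
        refine Finset.sum_congr rfl fun i hi => ?_
        rw [hve i, if_pos (Finset.mem_range.1 hi)]
      have h3 : ∑ i ∈ Finset.Ico N M, v i = S M - S N := by
        rw [hSe M, hSe N, ← Finset.sum_Ico_eq_sub _ hM]
        refine Finset.sum_congr rfl fun i hi => ?_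
        rw [hve i, if_neg (not_lt.2 (Finset.mem_Ico.1 hi).1)]
      rw [h2, h3]
    rw [h1, hTdef]
    abel
  have hTnorm : ∀ M, N ≤ M → ‖T‖ ^ 2 = ‖A - S M‖ ^ 2
      + 2 * ⟪A - S M, ∑ i ∈ Finset.range M, v i⟫_ℝ
      + (CN + ∑ i ∈ Finset.Ico N M, lam i) := by
    intro M hM
    rw [← hZnorm M hM, ← norm_add_sq_real, ← hTdecomp M hM]
  -- convergence of the KLE
  have hAS : ∀ M, (fun p : Θ × X => F p - (fbar p.2 + ∑ i ∈ Finset.range M,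
      Real.sqrt (lam i) * f_mode i p.1 * Phi i p.2)) =ᵐ[μ.prod ν] ⇑(A - S M) := by
    intro M
    have h5 := coeFn_sum_smul (Finset.range M) (fun i => Real.sqrt (lam i)) U
      (fun i p => f_mode i p.1 * Phi i p.2) (fun i _ => hUc i)
    rw [← hSe M] at h5
    filter_upwards [Lp.coeFn_sub A (S M), Lp.coeFn_sub (MemLp.toLp F hF) (MemLp.toLp _ hBmem),
      MemLp.coeFn_toLp hF, MemLp.coeFn_toLp hBmem, h5] with p h1 h2 h3 h4 h5
    have hA : A p = F p - fbar p.2 := by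
      rw [hAdef, h2, Pi.sub_apply, h3, h4]
    rw [h1, Pi.sub_apply, hA, h5]
    have hsum : ∑ i ∈ Finset.range M, Real.sqrt (lam i) * (f_mode i p.1 * Phi i p.2)
        = ∑ i ∈ Finset.range M, Real.sqrt (lam i) * f_mode i p.1 * Phi i p.2 :=
      Finset.sum_congr rfl fun i _ => (mul_assoc _ _ _).symm
    rw [hsum]; ring
  have hconv2 : Tendsto (fun M => ‖A - S M‖ ^ 2) atTop (𝓝 0) := by
    refine hconv.congr fun M => ?_
    rw [normL2_sq_eq]
    refine integral_congr_ae ?_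
    filter_upwards [hAS M] with p h
    rw [h]
  have hnormAS : Tendsto (fun M => ‖A - S M‖) atTop (𝓝 0) := by
    have h := (Real.continuous_sqrt.tendsto 0).comp hconv2
    simp only [Function.comp_def, Real.sqrt_zero] at h
    refine h.congr fun M => ?_
    exact Real.sqrt_sq (norm_nonneg _)
  -- tail sum
  have hlam' : Summable (fun i => lam (N + i)) := by
    have := (summable_nat_add_iff (f := lam) N).2 hlam_sum
    exact this.congr fun i => by rw [add_comm]
  have hTail : Tendsto (fun M => ∑ i ∈ Finset.Ico N M, lam i) atTop
      (𝓝 (∑' i, lam (N + i))) := by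
    have h1 : Tendsto (fun M => ∑ i ∈ Finset.range M, lam i) atTop (𝓝 (∑' i, lam i)) :=
      hlam_sum.hasSum.tendsto_sum_nat
    have h2 := h1.sub (tendsto_const_nhds (x := ∑ i ∈ Finset.range N, lam i) (f := atTop))
    have h3 : (∑' i, lam i) - ∑ i ∈ Finset.range N, lam i = ∑' i, lam (N + i) := by
      have h4 := Summable.sum_add_tsum_nat_add N hlam_sum
      have h5 : ∑' i, lam (i + N) = ∑' i, lam (N + i) := tsum_congr fun i => by rw [add_comm]
      rw [← h4, h5]
      ring
    rw [h3] at h2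
    refine h2.congr' ?_
    filter_upwards [eventually_ge_atTop N] with M hM
    rw [Finset.sum_Ico_eq_sub _ hM]
  -- bound on the orthogonal part
  have hZbound : ∀ M, N ≤ M → ‖∑ i ∈ Finset.range M, v i‖
      ≤ Real.sqrt (CN + ∑' i, lam (N + i)) := by
    intro M hM
    have h1 : ∑ i ∈ Finset.Ico N M, lam i ≤ ∑' i, lam (N + i) := by
      rw [Finset.sum_Ico_eq_sum_range]
      exact Summable.sum_le_tsum (Finset.range (M - N)) (fun _ _ => hlam_nonneg _) hlam'
    have h2 : ‖∑ i ∈ Finset.range M, v i‖ ^ 2 ≤ CN + ∑' i, lam (N + i) := by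
      rw [hZnorm M hM]; linarith
    calc ‖∑ i ∈ Finset.range M, v i‖
        = Real.sqrt (‖∑ i ∈ Finset.range M, v i‖ ^ 2) := (Real.sqrt_sq (norm_nonneg _)).symm
      _ ≤ Real.sqrt (CN + ∑' i, lam (N + i)) := Real.sqrt_le_sqrt h2
  have hcross : Tendsto (fun M => ⟪A - S M, ∑ i ∈ Finset.range M, v i⟫_ℝ) atTop (𝓝 0) := by
    have hb : Tendsto (fun M => ‖A - S M‖ * Real.sqrt (CN + ∑' i, lam (N + i)))
        atTop (𝓝 0) := by
      simpa using hnormAS.mul_const (Real.sqrt (CN + ∑' i, lam (N + i)))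
    refine squeeze_zero_norm' ?_ hb
    filter_upwards [eventually_ge_atTop N] with M hM
    calc ‖⟪A - S M, ∑ i ∈ Finset.range M, v i⟫_ℝ‖
        = |⟪A - S M, ∑ i ∈ Finset.range M, v i⟫_ℝ| := rfl
      _ ≤ ‖A - S M‖ * ‖∑ i ∈ Finset.range M, v i‖ := abs_real_inner_le_norm _ _
      _ ≤ ‖A - S M‖ * Real.sqrt (CN + ∑' i, lam (N + i)) :=
          mul_le_mul_of_nonneg_left (hZbound M hM) (norm_nonneg _)
  -- the total limit
  have hTsq : ‖T‖ ^ 2 = (∑' i, lam (N + i)) + CN := by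
    have hXlim : Tendsto (fun M => ‖A - S M‖ ^ 2
        + 2 * ⟪A - S M, ∑ i ∈ Finset.range M, v i⟫_ℝ
        + (CN + ∑ i ∈ Finset.Ico N M, lam i)) atTop
        (𝓝 (0 + 2 * 0 + (CN + ∑' i, lam (N + i)))) :=
      (hconv2.add (hcross.const_mul 2)).add (tendsto_const_nhds.add hTail)
    have heq : (fun _ : ℕ => ‖T‖ ^ 2) =ᶠ[atTop] (fun M => ‖A - S M‖ ^ 2
        + 2 * ⟪A - S M, ∑ i ∈ Finset.range M, v i⟫_ℝ
        + (CN + ∑ i ∈ Finset.Ico N M, lam i)) := by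
      filter_upwards [eventually_ge_atTop N] with M hM
      exact hTnorm M hM
    have h := tendsto_nhds_unique (tendsto_const_nhds.congr' heq) hXlim
    rw [h]; ring
  -- goal LHS equals ‖T‖²
  have hRc : ∀ i, ⇑(R i) =ᵐ[μ.prod ν] fun p => f_mode i p.1 * Phi i p.2
      - ∑ k ∈ Finset.range (NPC + 1), chat i k * (Psi k p.1 * Phi i p.2) := by
    intro i
    have h3 := coeFn_sum_smul (Finset.range (NPC + 1)) (chat i) (W i)
      (fun k p => Psi k p.1 * Phi i p.2) (fun k _ => hWc i k)
    have h0 : R i = U i - ∑ k ∈ Finset.range (NPC + 1), chat i k • W i k := hRe i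
    filter_upwards [Lp.coeFn_sub (U i) (∑ k ∈ Finset.range (NPC + 1), chat i k • W i k),
      hUc i, h3] with p h1 h2 h3
    rw [h0, h1, Pi.sub_apply, h2, h3]
  have hgoalLHS : ∫ p, (F p - (fbar p.2 + ∑ i ∈ Finset.range N,
      Real.sqrt (lam i) * (∑ k ∈ Finset.range (NPC + 1), chat i k * Psi k p.1) * Phi i p.2)) ^ 2
      ∂(μ.prod ν) = ‖T‖ ^ 2 := by
    rw [normL2_sq_eq]
    refine integral_congr_ae ?_
    have hDc := coeFn_sum_smul (Finset.range N) (fun i => Real.sqrt (lam i)) R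
      (fun i p => f_mode i p.1 * Phi i p.2
        - ∑ k ∈ Finset.range (NPC + 1), chat i k * (Psi k p.1 * Phi i p.2)) (fun i _ => hRc i)
    rw [← hDdef] at hDc
    have hT0 : T = (A - S N) + D := hTdef
    filter_upwards [hAS N, Lp.coeFn_add (A - S N) D, hDc] with p h1 h2 h3
    have hTp : T p = (A - S N) p + D p := by rw [hT0, h2, Pi.add_apply]
    rw [hTp, ← h1, h3]
    congr 1
    have key : ∀ i, Real.sqrt (lam i) * (f_mode i p.1 * Phi i p.2
        - ∑ k ∈ Finset.range (NPC + 1), chat i k * (Psi k p.1 * Phi i p.2))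
        = Real.sqrt (lam i) * f_mode i p.1 * Phi i p.2
          - Real.sqrt (lam i) * (∑ k ∈ Finset.range (NPC + 1), chat i k * Psi k p.1)
            * Phi i p.2 := by
      intro i
      have hs : ∑ k ∈ Finset.range (NPC + 1), chat i k * (Psi k p.1 * Phi i p.2)
          = (∑ k ∈ Finset.range (NPC + 1), chat i k * Psi k p.1) * Phi i p.2 := by
        rw [Finset.sum_mul]
        exact Finset.sum_congr rfl fun k _ => by ring
      rw [hs]; ring
    calc F p - (fbar p.2 + ∑ i ∈ Finset.range N, Real.sqrt (lam i)
          * (∑ k ∈ Finset.range (NPC + 1), chat i k * Psi k p.1) * Phi i p.2)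
        = F p - (fbar p.2 + ∑ i ∈ Finset.range N,
            Real.sqrt (lam i) * f_mode i p.1 * Phi i p.2)
          + ∑ i ∈ Finset.range N, (Real.sqrt (lam i) * f_mode i p.1 * Phi i p.2
            - Real.sqrt (lam i) * (∑ k ∈ Finset.range (NPC + 1), chat i k * Psi k p.1)
              * Phi i p.2) := by
          rw [Finset.sum_sub_distrib]; ring
      _ = F p - (fbar p.2 + ∑ i ∈ Finset.range N,
            Real.sqrt (lam i) * f_mode i p.1 * Phi i p.2)
          + ∑ i ∈ Finset.range N, Real.sqrt (lam i) * (f_mode i p.1 * Phi i p.2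
            - ∑ k ∈ Finset.range (NPC + 1), chat i k * (Psi k p.1 * Phi i p.2)) := by
          rw [Finset.sum_congr rfl fun i _ => (key i).symm]
  -- per-mode PCE error
  have hRnorm : ∀ i, i < N → ‖R i‖ ^ 2
      = (∑ k ∈ Finset.range (NPC + 1), (c i k - chat i k) ^ 2 * ∫ ξ, (Psi k ξ) ^ 2 ∂μ)
        + ∑' k, (c i (k + (NPC + 1))) ^ 2 * ∫ ξ, (Psi (k + (NPC + 1)) ξ) ^ 2 ∂μ := by
    intro i hi
    set y : Lp ℝ 2 (μ.prod ν) := ∑ k ∈ Finset.range (NPC + 1), chat i k • W i k with hydef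
    set x : ℕ → Lp ℝ 2 (μ.prod ν) :=
      fun K => ∑ k ∈ Finset.range K, c i k • W i k with hxdef
    have hxe : ∀ K, x K = ∑ k ∈ Finset.range K, c i k • W i k := fun K => by simp only [hxdef]
    have hstep : ∀ K, ∫ ξ, (f_mode i ξ - ∑ k ∈ Finset.range K, c i k * Psi k ξ) ^ 2 ∂μ
        = ‖U i - x K‖ ^ 2 := by
      intro K
      have hrep : ⇑(U i - x K) =ᵐ[μ.prod ν] fun p =>
          (f_mode i p.1 - ∑ k ∈ Finset.range K, c i k * Psi k p.1) * Phi i p.2 := by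
        have h3 := coeFn_sum_smul (Finset.range K) (c i) (W i)
          (fun k p => Psi k p.1 * Phi i p.2) (fun k _ => hWc i k)
        rw [← hxe K] at h3
        filter_upwards [Lp.coeFn_sub (U i) (x K), hUc i, h3] with p h1 h2 h3
        rw [h1, Pi.sub_apply, h2, h3]
        have hs : ∑ k ∈ Finset.range K, c i k * (Psi k p.1 * Phi i p.2)
            = (∑ k ∈ Finset.range K, c i k * Psi k p.1) * Phi i p.2 := by
          rw [Finset.sum_mul]
          exact Finset.sum_congr rfl fun k _ => by ring
        rw [hs]; ring
      rw [normL2_sq_eq]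
      have h4 : ∫ p, ((U i - x K) p) ^ 2 ∂(μ.prod ν)
          = ∫ p, ((f_mode i p.1 - ∑ k ∈ Finset.range K, c i k * Psi k p.1) * Phi i p.2) ^ 2
            ∂(μ.prod ν) := by
        refine integral_congr_ae ?_
        filter_upwards [hrep] with p h
        rw [h]
      rw [h4, integral_sq_prod (fun ξ => f_mode i ξ - ∑ k ∈ Finset.range K, c i k * Psi k ξ) (Phi i)]
      have h5 : ∫ s, Phi i s ^ 2 ∂ν = 1 := by
        have := hPhi_on i i
        rw [if_pos rfl] at this
        simpa [pow_two] using this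
      rw [h5, mul_one]
    have hlim0 : Tendsto (fun K => ‖U i - x K‖ ^ 2) atTop (𝓝 0) :=
      (hPCE i hi).congr hstep
    have hxU : Tendsto x atTop (𝓝 (U i)) := by
      have h1 : Tendsto (fun K => ‖U i - x K‖) atTop (𝓝 0) := by
        have h := (Real.continuous_sqrt.tendsto 0).comp hlim0
        simp only [Function.comp_def, Real.sqrt_zero] at h
        refine h.congr fun K => ?_
        exact Real.sqrt_sq (norm_nonneg _)
      rw [tendsto_iff_norm_sub_tendsto_zero]
      refine h1.congr fun K => ?_
      rw [norm_sub_rev]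
    have hy_lim : Tendsto (fun K => ‖x K - y‖ ^ 2) atTop (𝓝 (‖U i - y‖ ^ 2)) := by
      have h1 : Tendsto (fun K => x K - y) atTop (𝓝 (U i - y)) := hxU.sub tendsto_const_nhds
      exact ((continuous_norm.tendsto _).comp h1).pow 2
    obtain ⟨t, hte⟩ : ∃ t : ℕ → ℝ, ∀ k, t k
        = (c i k - (if k < NPC + 1 then chat i k else 0)) ^ 2 * ∫ ξ, (Psi k ξ) ^ 2 ∂μ :=
      ⟨_, fun k => rfl⟩
    have hparts : ∀ K, NPC + 1 ≤ K → ‖x K - y‖ ^ 2 = ∑ k ∈ Finset.range K, t k := by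
      intro K hK
      have hy2 : y = ∑ k ∈ Finset.range K, (if k < NPC + 1 then chat i k else 0) • W i k := by
        rw [hydef]
        have h1 : ∑ k ∈ Finset.range (NPC + 1), chat i k • W i k
            = ∑ k ∈ Finset.range (NPC + 1), (if k < NPC + 1 then chat i k else 0) • W i k :=
          Finset.sum_congr rfl fun k hk => by rw [if_pos (Finset.mem_range.1 hk)]
        rw [h1]
        refine Finset.sum_subset (Finset.range_subset_range.2 hK) fun k _ hk => ?_
        rw [if_neg (fun h => hk (Finset.mem_range.2 h)), zero_smul]
      have hxy : x K - y
          = ∑ k ∈ Finset.range K, (c i k - (if k < NPC + 1 then chat i k else 0)) • W i k := by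
        rw [hxe K, hy2, ← Finset.sum_sub_distrib]
        exact Finset.sum_congr rfl fun k _ => (sub_smul _ _ _).symm
      rw [hxy, norm_sq_sum_orthogonal]
      · refine Finset.sum_congr rfl fun k _ => ?_
        rw [norm_smul, mul_pow, Real.norm_eq_abs, sq_abs, hWnorm i k, hte k]
      · intro k hk l hl hkl
        rw [real_inner_smul_left, real_inner_smul_right, hWW i i k l, if_pos rfl, mul_one,
          hPsi_orth k l hkl, mul_zero, mul_zero]
    have ht_nonneg : ∀ k, 0 ≤ t k := fun k => by
      rw [hte k]
      exact mul_nonneg (sq_nonneg _) (integral_nonneg fun ξ => sq_nonneg _)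
    have hhs : HasSum t (‖U i - y‖ ^ 2) := by
      rw [hasSum_iff_tendsto_nat_of_nonneg ht_nonneg]
      refine hy_lim.congr' ?_
      filter_upwards [eventually_ge_atTop (NPC + 1)] with K hK
      exact hparts K hK
    have hRy : ‖R i‖ ^ 2 = ‖U i - y‖ ^ 2 := by rw [hRe i, hydef]
    have hsplit := Summable.sum_add_tsum_nat_add (NPC + 1) hhs.summable
    rw [hRy, ← hhs.tsum_eq, ← hsplit]
    congr 1
    · refine Finset.sum_congr rfl fun k hk => ?_
      rw [hte k, if_pos (Finset.mem_range.1 hk)]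
    · refine tsum_congr fun k => ?_
      rw [hte (k + (NPC + 1)), if_neg (by omega), sub_zero]
  -- assemble
  rw [hgoalLHS, hTsq]
  refine le_of_eq ?_
  rw [hCNdef]
  rw [Finset.sum_congr rfl (fun i hi => by
    rw [hRnorm i (Finset.mem_range.1 hi), mul_add])]
  rw [Finset.sum_add_distrib, add_assoc]
end
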